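/- Let n ≥ 3 and ℓ ≥ 1. The congruence subgroup Γ_{n+1}(ℓ) ⊆ SL_{n+1}(ℤ) is contained in the subgroup generated by Γ_n(ℓ) (embedded in the top-left n×n block) together with the copy of SL_2(ℤ) embedded in the bottom-right 2×2 block. -/

import Mathlib

open Matrix

namespace CongrAux

set_option linter.unusedSectionVars false

variable {n : Type*} [Fintype n] [DecidableEq n] {α : Type*} [CommRing α]

/-- Matrix supported on row `i`. -/
def Rm (i : n) (u : n → α) : Matrix n n α := Matrix.of fun a b => if a = i then u b else 0

/-- Matrix supported on column `j`. -/
def Cm (j : n) (w : n → α) : Matrix n n α := Matrix.of fun a b => if b = j then w a else 0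

@[simp] lemma Rm_apply (i : n) (u : n → α) (a b : n) :
    Rm i u a b = if a = i then u b else 0 := rfl

@[simp] lemma Cm_apply (j : n) (w : n → α) (a b : n) :
    Cm j w a b = if b = j then w a else 0 := rfl

lemma Rm_transpose (i : n) (u : n → α) : (Rm i u)ᵀ = Cm i u := rfl

lemma Cm_transpose (j : n) (w : n → α) : (Cm j w)ᵀ = Rm j w := rfl

lemma Rm_neg (i : n) (u : n → α) : Rm i (-u) = -(Rm i u) := by
  ext a b
  simp only [Rm_apply, Matrix.neg_apply, Pi.neg_apply]
  split <;> simp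

lemma Cm_neg (j : n) (w : n → α) : Cm j (-w) = -(Cm j w) := by
  ext a b
  simp only [Cm_apply, Matrix.neg_apply, Pi.neg_apply]
  split <;> simp

lemma Rm_mul_Rm (i j : n) (u v : n → α) : Rm i u * Rm j v = u j • Rm i v := by
  ext a b
  by_cases h : a = i <;>
    simp [Matrix.mul_apply, h, ite_mul, mul_ite, Finset.sum_ite_eq', smul_eq_mul]

lemma Cm_mul_Cm (j k : n) (w v : n → α) : Cm j w * Cm k v = v j • Cm k w := by
  ext a b
  by_cases h : b = k <;>
    simp [Matrix.mul_apply, h, ite_mul, mul_ite, Finset.sum_ite_eq, smul_eq_mul, mul_comm]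

lemma Rm_mul_apply (i : n) (u : n → α) (X : Matrix n n α) (a b : n) :
    (Rm i u * X) a b = if a = i then (∑ k, u k * X k b) else 0 := by
  rw [Matrix.mul_apply]
  split <;> simp_all

lemma Cm_mul_apply (j : n) (w : n → α) (X : Matrix n n α) (a b : n) :
    (Cm j w * X) a b = w a * X j b := by
  rw [Matrix.mul_apply]
  simp [ite_mul, Finset.sum_ite_eq']

lemma mul_Rm_apply (X : Matrix n n α) (i : n) (u : n → α) (a b : n) :
    (X * Rm i u) a b = X a i * u b := by
  rw [Matrix.mul_apply]
  simp [mul_ite, Finset.sum_ite_eq]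

lemma one_add_Rm_mul_apply (i : n) (u : n → α) (X : Matrix n n α) (a b : n) :
    ((1 + Rm i u) * X) a b = X a b + (if a = i then (∑ k, u k * X k b) else 0) := by
  rw [Matrix.add_mul, Matrix.one_mul, Matrix.add_apply, Rm_mul_apply]

lemma one_add_Cm_mul_apply (j : n) (w : n → α) (X : Matrix n n α) (a b : n) :
    ((1 + Cm j w) * X) a b = X a b + w a * X j b := by
  rw [Matrix.add_mul, Matrix.one_mul, Matrix.add_apply, Cm_mul_apply]

lemma mul_one_add_Rm_apply (X : Matrix n n α) (i : n) (u : n → α) (a b : n) :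
    (X * (1 + Rm i u)) a b = X a b + X a i * u b := by
  rw [Matrix.mul_add, Matrix.mul_one, Matrix.add_apply, mul_Rm_apply]

lemma det_one_add_Rm (i : n) (u : n → α) (h : u i = 0) : (1 + Rm i u).det = 1 := by
  have hR : Rm i u = Matrix.replicateCol Unit (Pi.single i (1 : α)) * Matrix.replicateRow Unit u := by
    ext a b
    simp [Matrix.mul_apply, Matrix.replicateCol, Matrix.replicateRow, Pi.single_apply, ite_mul]
  rw [hR, Matrix.det_one_add_replicateCol_mul_replicateRow]
  simp [dotProduct, Pi.single_apply, h]

lemma det_one_add_Cm (j : n) (w : n → α) (h : w j = 0) : (1 + Cm j w).det = 1 := by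
  rw [← Matrix.det_transpose, Matrix.transpose_add, Matrix.transpose_one, Cm_transpose]
  exact det_one_add_Rm j w h

lemma comm_row (a b : n) (hab : a ≠ b) (u : n → α) (ha : u a = 0) (hb : u b = 0) :
    (1 + Rm b (Pi.single a 1)) * (1 + Rm a u) * (1 - Rm b (Pi.single a 1)) * (1 - Rm a u)
      = 1 + Rm b u := by
  set s : n → α := Pi.single a 1 with hs
  have hsa : s a = 1 := Pi.single_eq_same a 1
  have hsb : s b = 0 := Pi.single_eq_of_ne (Ne.symm hab) 1
  have h1 : Rm b s * Rm a u = Rm b u := by rw [Rm_mul_Rm, hsa, one_smul]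
  have h2 : Rm a u * Rm b s = 0 := by rw [Rm_mul_Rm, hb, zero_smul]
  have h3 : Rm a u * Rm a u = 0 := by rw [Rm_mul_Rm, ha, zero_smul]
  have h4 : Rm b s * Rm b s = 0 := by rw [Rm_mul_Rm, hsb, zero_smul]
  have h5 : Rm b u * Rm a u = 0 := by rw [Rm_mul_Rm, ha, zero_smul]
  have h6 : Rm b u * Rm b s = 0 := by rw [Rm_mul_Rm, hb, zero_smul]
  have h7 : Rm b s * Rm b u = 0 := by rw [Rm_mul_Rm, hsb, zero_smul]
  have h8 : Rm a u * Rm b u = 0 := by rw [Rm_mul_Rm, hb, zero_smul]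
  have h9 : Rm b u * Rm b u = 0 := by rw [Rm_mul_Rm, hb, zero_smul]
  have e1 : (1 + Rm b s) * (1 + Rm a u) = 1 + Rm b s + Rm a u + Rm b u := by
    simp only [Matrix.mul_add, Matrix.add_mul, Matrix.one_mul, Matrix.mul_one, h1]
    abel
  have e2 : (1 - Rm b s) * (1 - Rm a u) = 1 - Rm b s - Rm a u + Rm b u := by
    simp only [Matrix.mul_sub, Matrix.sub_mul, Matrix.one_mul, Matrix.mul_one, h1]
    abel
  rw [e1, mul_assoc, e2]
  simp only [Matrix.mul_sub, Matrix.sub_mul, Matrix.mul_add, Matrix.add_mul,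
    Matrix.one_mul, Matrix.mul_one, h1, h2, h3, h4, h5, h6, h7, h8, h9]
  abel

lemma comm_col (a b : n) (hab : a ≠ b) (u : n → α) (ha : u a = 0) (hb : u b = 0) :
    (1 - Cm a u) * (1 - Cm b (Pi.single a 1)) * (1 + Cm a u) * (1 + Cm b (Pi.single a 1))
      = 1 + Cm b u := by
  have h := congrArg Matrix.transpose (comm_row a b hab u ha hb)
  simpa only [Matrix.transpose_mul, Matrix.transpose_add, Matrix.transpose_sub,
    Matrix.transpose_one, Rm_transpose, ← mul_assoc] using h




variable {m : ℕ}
def pIdx (m : ℕ) : Fin (m + 4) := ⟨m + 2, by omega⟩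
def qIdx (m : ℕ) : Fin (m + 4) := ⟨m + 3, by omega⟩
lemma p_ne_q : pIdx m ≠ qIdx m := by simp [pIdx, qIdx, Fin.ext_iff]
lemma tri (b : Fin (m + 4)) : (b : ℕ) < m + 2 ∨ b = pIdx m ∨ b = qIdx m := by
  rcases lt_or_ge (b : ℕ) (m + 2) with h | h
  · exact Or.inl h
  · have hb := b.isLt
    rcases Nat.lt_or_ge (b : ℕ) (m + 3) with h2 | h2
    · exact Or.inr (Or.inl (by simp [pIdx, Fin.ext_iff]; omega))
    · exact Or.inr (Or.inr (by simp [qIdx, Fin.ext_iff]; omega))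
def eqv (m : ℕ) : Fin (m + 4) ≃ Fin (m + 2) ⊕ Fin 2 :=
  ((finSumFinEquiv (m := m + 2) (n := 2)).trans (finCongr (by omega))).symm
lemma eqv_lt (a : Fin (m + 4)) (h : (a : ℕ) < m + 2) : eqv m a = Sum.inl ⟨(a : ℕ), h⟩ := by
  rw [eqv, Equiv.symm_apply_eq]; simp [Fin.ext_iff]
lemma eqv_p : eqv m (pIdx m) = Sum.inr 0 := by
  rw [eqv, Equiv.symm_apply_eq]; simp [pIdx, Fin.ext_iff]
lemma eqv_q : eqv m (qIdx m) = Sum.inr 1 := by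
  rw [eqv, Equiv.symm_apply_eq]; simp [qIdx, Fin.ext_iff]

/-- The bottom-right `2 × 2` embedding of a `2 × 2` matrix. -/
def embM (m : ℕ) (S : Matrix (Fin 2) (Fin 2) ℤ) : Matrix (Fin (m + 4)) (Fin (m + 4)) ℤ :=
  (Matrix.fromBlocks 1 0 0 S).submatrix (eqv m) (eqv m)

lemma det_embM {S : Matrix (Fin 2) (Fin 2) ℤ} (hS : S.det = 1) : (embM m S).det = 1 := by
  rw [embM, Matrix.det_submatrix_equiv_self, Matrix.det_fromBlocks_zero₂₁, Matrix.det_one,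
    one_mul, hS]

lemma embM_apply_lt (S : Matrix (Fin 2) (Fin 2) ℤ) (a b : Fin (m + 4)) (ha : (a : ℕ) < m + 2) :
    embM m S a b = (1 : Matrix (Fin (m + 4)) (Fin (m + 4)) ℤ) a b := by
  rw [embM, Matrix.submatrix_apply, eqv_lt a ha]
  rcases tri b with hb | hb | hb
  · rw [eqv_lt b hb]
    simp [Matrix.one_apply, Fin.ext_iff]
  · subst hb; rw [eqv_p]
    have : a ≠ pIdx m := by simp [pIdx, Fin.ext_iff]; omega
    simp [Matrix.one_apply, this]
  · subst hb; rw [eqv_q]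
    have : a ≠ qIdx m := by simp [qIdx, Fin.ext_iff]; omega
    simp [Matrix.one_apply, this]

lemma embM_apply_p (S : Matrix (Fin 2) (Fin 2) ℤ) (b : Fin (m + 4)) :
    embM m S (pIdx m) b
      = (if b = pIdx m then S 0 0 else 0) + (if b = qIdx m then S 0 1 else 0) := by
  rw [embM, Matrix.submatrix_apply, eqv_p]
  rcases tri b with hb | hb | hb
  · rw [eqv_lt b hb]
    have h1 : b ≠ pIdx m := by simp [pIdx, Fin.ext_iff]; omega
    have h2 : b ≠ qIdx m := by simp [qIdx, Fin.ext_iff]; omega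
    simp [h1, h2]
  · subst hb; rw [eqv_p]; simp [p_ne_q]
  · subst hb; rw [eqv_q]; simp [(p_ne_q (m := m)).symm]

lemma embM_apply_q (S : Matrix (Fin 2) (Fin 2) ℤ) (b : Fin (m + 4)) :
    embM m S (qIdx m) b
      = (if b = pIdx m then S 1 0 else 0) + (if b = qIdx m then S 1 1 else 0) := by
  rw [embM, Matrix.submatrix_apply, eqv_q]
  rcases tri b with hb | hb | hb
  · rw [eqv_lt b hb]
    have h1 : b ≠ pIdx m := by simp [pIdx, Fin.ext_iff]; omega
    have h2 : b ≠ qIdx m := by simp [qIdx, Fin.ext_iff]; omega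
    simp [h1, h2]
  · subst hb; rw [eqv_p]; simp [p_ne_q]
  · subst hb; rw [eqv_q]; simp [(p_ne_q (m := m)).symm]

lemma embM_mul_apply_lt (S : Matrix (Fin 2) (Fin 2) ℤ) (X : Matrix (Fin (m + 4)) (Fin (m + 4)) ℤ)
    (a b : Fin (m + 4)) (ha : (a : ℕ) < m + 2) : (embM m S * X) a b = X a b := by
  rw [Matrix.mul_apply]
  simp only [embM_apply_lt S a _ ha]
  rw [← Matrix.mul_apply, Matrix.one_mul]

lemma embM_mul_apply_p (S : Matrix (Fin 2) (Fin 2) ℤ) (X : Matrix (Fin (m + 4)) (Fin (m + 4)) ℤ)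
    (b : Fin (m + 4)) :
    (embM m S * X) (pIdx m) b = S 0 0 * X (pIdx m) b + S 0 1 * X (qIdx m) b := by
  rw [Matrix.mul_apply]
  simp only [embM_apply_p, add_mul, ite_mul, zero_mul]
  rw [Finset.sum_add_distrib, Finset.sum_ite_eq' Finset.univ (pIdx m),
    Finset.sum_ite_eq' Finset.univ (qIdx m)]
  simp

lemma embM_mul_apply_q (S : Matrix (Fin 2) (Fin 2) ℤ) (X : Matrix (Fin (m + 4)) (Fin (m + 4)) ℤ)
    (b : Fin (m + 4)) :
    (embM m S * X) (qIdx m) b = S 1 0 * X (pIdx m) b + S 1 1 * X (qIdx m) b := by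
  rw [Matrix.mul_apply]
  simp only [embM_apply_q, add_mul, ite_mul, zero_mul]
  rw [Finset.sum_add_distrib, Finset.sum_ite_eq' Finset.univ (pIdx m),
    Finset.sum_ite_eq' Finset.univ (qIdx m)]
  simp



section Defs

variable (m ℓ : ℕ)

/-- The embedded congruence subgroup generators. -/
def setA : Set (Matrix.SpecialLinearGroup (Fin (m + 4)) ℤ) :=
  {g : Matrix.SpecialLinearGroup (Fin (m + 4)) ℤ |
      g ∈ (Matrix.SpecialLinearGroup.map (n := Fin (m + 4))
        (Int.castRingHom (ZMod ℓ))).ker ∧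
      ∀ i j : Fin (m + 4), ((i : ℕ) = m + 3 ∨ (j : ℕ) = m + 3) →
        g.val i j = (1 : Matrix (Fin (m + 4)) (Fin (m + 4)) ℤ) i j}

/-- The bottom-right `SL₂` generators, over a general ring. -/
def botSet (R : Type*) [CommRing R] : Set (Matrix.SpecialLinearGroup (Fin (m + 4)) R) :=
  {g : Matrix.SpecialLinearGroup (Fin (m + 4)) R |
      ∀ i j : Fin (m + 4), ((i : ℕ) < m + 2 ∨ (j : ℕ) < m + 2) →
        g.val i j = (1 : Matrix (Fin (m + 4)) (Fin (m + 4)) R) i j}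

/-- The subgroup generated by both generating sets. -/
def HH : Subgroup (Matrix.SpecialLinearGroup (Fin (m + 4)) ℤ) :=
  Subgroup.closure (setA m ℓ ∪ botSet m ℤ)

end Defs

section Elements

variable {m : ℕ}

/-- Row-perturbation element of the special linear group. -/
def mkR (i : Fin (m + 4)) (u : Fin (m + 4) → ℤ) (h : u i = 0) :
    Matrix.SpecialLinearGroup (Fin (m + 4)) ℤ :=
  ⟨1 + Rm i u, det_one_add_Rm i u h⟩

/-- Column-perturbation element of the special linear group. -/
def mkC (j : Fin (m + 4)) (w : Fin (m + 4) → ℤ) (h : w j = 0) :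
    Matrix.SpecialLinearGroup (Fin (m + 4)) ℤ :=
  ⟨1 + Cm j w, det_one_add_Cm j w h⟩

/-- Embedded `SL₂` element. -/
def mkEmb (S : Matrix (Fin 2) (Fin 2) ℤ) (hS : S.det = 1) :
    Matrix.SpecialLinearGroup (Fin (m + 4)) ℤ :=
  ⟨embM m S, det_embM hS⟩

lemma one_matrix_cast (ℓ : ℕ) (a b : Fin (m + 4)) :
    (((1 : Matrix (Fin (m + 4)) (Fin (m + 4)) ℤ) a b : ℤ) : ZMod ℓ)
      = (1 : Matrix (Fin (m + 4)) (Fin (m + 4)) (ZMod ℓ)) a b := by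
  by_cases h : a = b <;> simp [Matrix.one_apply, h]

lemma mem_ker_of_dvd (ℓ : ℕ) (g : Matrix.SpecialLinearGroup (Fin (m + 4)) ℤ)
    (h : ∀ a b, (ℓ : ℤ) ∣ g.val a b - (1 : Matrix (Fin (m + 4)) (Fin (m + 4)) ℤ) a b) :
    g ∈ (Matrix.SpecialLinearGroup.map (n := Fin (m + 4)) (Int.castRingHom (ZMod ℓ))).ker := by
  rw [MonoidHom.mem_ker]
  apply Subtype.ext
  apply Matrix.ext
  intro a b
  have h1 : ((g.val a b - (1 : Matrix (Fin (m + 4)) (Fin (m + 4)) ℤ) a b : ℤ) : ZMod ℓ) = 0 :=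
    (ZMod.intCast_zmod_eq_zero_iff_dvd _ _).mpr (h a b)
  rw [Int.cast_sub, sub_eq_zero] at h1
  calc (Matrix.SpecialLinearGroup.map (n := Fin (m + 4)) (Int.castRingHom (ZMod ℓ)) g).val a b
      = ((g.val a b : ℤ) : ZMod ℓ) := by
        rfl
    _ = (1 : Matrix (Fin (m + 4)) (Fin (m + 4)) (ZMod ℓ)) a b := by
        rw [h1, one_matrix_cast]
    _ = ((1 : Matrix.SpecialLinearGroup (Fin (m + 4)) (ZMod ℓ))).val a b := by
        rw [Matrix.SpecialLinearGroup.coe_one]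

lemma ker_entry {ℓ : ℕ} {g : Matrix.SpecialLinearGroup (Fin (m + 4)) ℤ}
    (hg : g ∈ (Matrix.SpecialLinearGroup.map (n := Fin (m + 4))
      (Int.castRingHom (ZMod ℓ))).ker) (a b : Fin (m + 4)) :
    ((g.val a b : ℤ) : ZMod ℓ) = (1 : Matrix (Fin (m + 4)) (Fin (m + 4)) (ZMod ℓ)) a b := by
  rw [MonoidHom.mem_ker] at hg
  have := congrArg (fun x => x.val a b) hg
  exact this

end Elements

section Memberships

variable {m ℓ : ℕ}

@[simp] lemma mkR_val (i : Fin (m + 4)) (u : Fin (m + 4) → ℤ) (h : u i = 0) :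
    (mkR i u h).val = 1 + Rm i u := rfl

@[simp] lemma mkC_val (j : Fin (m + 4)) (w : Fin (m + 4) → ℤ) (h : w j = 0) :
    (mkC j w h).val = 1 + Cm j w := rfl

@[simp] lemma mkEmb_val (S : Matrix (Fin 2) (Fin 2) ℤ) (hS : S.det = 1) :
    (mkEmb (m := m) S hS).val = embM m S := rfl

lemma memA_mkR (i : Fin (m + 4)) (hi : (i : ℕ) ≠ m + 3) (u : Fin (m + 4) → ℤ)
    (hu : ∀ k, (ℓ : ℤ) ∣ u k) (hui : u i = 0) (huq : u (qIdx m) = 0) :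
    mkR i u hui ∈ setA m ℓ := by
  constructor
  · apply mem_ker_of_dvd
    intro a b
    simp only [mkR_val, Matrix.add_apply, Rm_apply, add_sub_cancel_left]
    split
    · exact hu b
    · exact dvd_zero _
  · intro a b hab
    simp only [mkR_val, Matrix.add_apply, Rm_apply]
    rcases hab with hab | hab
    · have : a ≠ i := fun h => hi (h ▸ hab)
      simp [this]
    · have hb : b = qIdx m := by simp [qIdx, Fin.ext_iff, hab]
      subst hb
      split <;> simp [huq]

lemma memA_mkC (j : Fin (m + 4)) (hj : (j : ℕ) ≠ m + 3) (w : Fin (m + 4) → ℤ)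
    (hw : ∀ k, (ℓ : ℤ) ∣ w k) (hwj : w j = 0) (hwq : w (qIdx m) = 0) :
    mkC j w hwj ∈ setA m ℓ := by
  constructor
  · apply mem_ker_of_dvd
    intro a b
    simp only [mkC_val, Matrix.add_apply, Cm_apply, add_sub_cancel_left]
    split
    · exact hw a
    · exact dvd_zero _
  · intro a b hab
    simp only [mkC_val, Matrix.add_apply, Cm_apply]
    rcases hab with hab | hab
    · have ha : a = qIdx m := by simp [qIdx, Fin.ext_iff, hab]
      subst ha
      split <;> simp [hwq]
    · have : b ≠ j := fun h => hj (h ▸ hab)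
      simp [this]

lemma memB_mkR (i : Fin (m + 4)) (hi : m + 2 ≤ (i : ℕ)) (u : Fin (m + 4) → ℤ)
    (hu0 : ∀ k : Fin (m + 4), (k : ℕ) < m + 2 → u k = 0) (hui : u i = 0) :
    mkR i u hui ∈ botSet m ℤ := by
  intro a b hab
  simp only [mkR_val, Matrix.add_apply, Rm_apply]
  by_cases h : a = i
  · subst h
    rcases hab with hab | hab
    · omega
    · simp [hu0 b hab]
  · simp [h]

lemma memB_mkC (j : Fin (m + 4)) (hj : m + 2 ≤ (j : ℕ)) (w : Fin (m + 4) → ℤ)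
    (hw0 : ∀ k : Fin (m + 4), (k : ℕ) < m + 2 → w k = 0) (hwj : w j = 0) :
    mkC j w hwj ∈ botSet m ℤ := by
  intro a b hab
  simp only [mkC_val, Matrix.add_apply, Cm_apply]
  by_cases h : b = j
  · subst h
    rcases hab with hab | hab
    · simp [hw0 a hab]
    · omega
  · simp [h]

lemma memB_mkEmb (S : Matrix (Fin 2) (Fin 2) ℤ) (hS : S.det = 1) :
    mkEmb (m := m) S hS ∈ botSet m ℤ := by
  intro i j hij
  rcases tri i with hi | hi | hi
  · exact embM_apply_lt S i j hi
  · subst hi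
    rcases hij with hij | hij
    · simp [pIdx] at hij
    · rw [mkEmb_val, embM_apply_p]
      have h1 : j ≠ pIdx m := by simp [pIdx, Fin.ext_iff]; omega
      have h2 : j ≠ qIdx m := by simp [qIdx, Fin.ext_iff]; omega
      have h3 : pIdx m ≠ j := fun h => h1 h.symm
      simp [h1, h2, Matrix.one_apply_ne h3]
  · subst hi
    rcases hij with hij | hij
    · simp [qIdx] at hij
    · rw [mkEmb_val, embM_apply_q]
      have h1 : j ≠ pIdx m := by simp [pIdx, Fin.ext_iff]; omega
      have h2 : j ≠ qIdx m := by simp [qIdx, Fin.ext_iff]; omega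
      have h3 : qIdx m ≠ j := fun h => h2 h.symm
      simp [h1, h2, Matrix.one_apply_ne h3]

lemma botSet_mul {R : Type*} [CommRing R] {x y : Matrix.SpecialLinearGroup (Fin (m + 4)) R}
    (hx : x ∈ botSet m R) (hy : y ∈ botSet m R) : x * y ∈ botSet m R := by
  intro i j hij
  rw [Matrix.SpecialLinearGroup.coe_mul, Matrix.mul_apply]
  by_cases hi : (i : ℕ) < m + 2
  · have hrow : ∀ k, x.val i k = (1 : Matrix (Fin (m + 4)) (Fin (m + 4)) R) i k :=
      fun k => hx i k (Or.inl hi)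
    rw [Finset.sum_congr rfl (fun k _ => by rw [hrow k])]
    rw [← Matrix.mul_apply, Matrix.one_mul]
    exact hy i j (Or.inl hi)
  · have hj : (j : ℕ) < m + 2 := hij.resolve_left hi
    have hcol : ∀ k, y.val k j = (1 : Matrix (Fin (m + 4)) (Fin (m + 4)) R) k j :=
      fun k => hy k j (Or.inr hj)
    rw [Finset.sum_congr rfl (fun k _ => by rw [hcol k])]
    rw [← Matrix.mul_apply, Matrix.mul_one]
    exact hx i j (Or.inr hj)

lemma one_mem_botSet {R : Type*} [CommRing R] : (1 : Matrix.SpecialLinearGroup (Fin (m + 4)) R) ∈ botSet m R := by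
  intro i j _
  rw [Matrix.SpecialLinearGroup.coe_one]

lemma map_mem_botSet {x : Matrix.SpecialLinearGroup (Fin (m + 4)) ℤ} (hx : x ∈ botSet m ℤ) :
    Matrix.SpecialLinearGroup.map (n := Fin (m + 4)) (Int.castRingHom (ZMod ℓ)) x
      ∈ botSet m (ZMod ℓ) := by
  intro i j hij
  have : (Matrix.SpecialLinearGroup.map (n := Fin (m + 4)) (Int.castRingHom (ZMod ℓ)) x).val i j
      = ((x.val i j : ℤ) : ZMod ℓ) := by
    rfl
  rw [this, hx i j hij, one_matrix_cast]

lemma SL_eq_one {R : Type*} [CommRing R] (x : Matrix.SpecialLinearGroup (Fin (m + 4)) R)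
    (h : ∀ a b, ¬(a = pIdx m ∧ b = pIdx m) →
      x.val a b = (1 : Matrix (Fin (m + 4)) (Fin (m + 4)) R) a b) : x = 1 := by
  set c : R := x.val (pIdx m) (pIdx m) with hc
  have hxval : x.val = Matrix.updateRow (1 : Matrix (Fin (m + 4)) (Fin (m + 4)) R) (pIdx m)
      (c • (1 : Matrix (Fin (m + 4)) (Fin (m + 4)) R) (pIdx m)) := by
    apply Matrix.ext
    intro a b
    by_cases ha : a = pIdx m
    · subst ha
      rw [Matrix.updateRow_self]
      by_cases hb : b = pIdx m
      · subst hb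
        simp [Matrix.one_apply, hc]
      · rw [h _ _ (fun hh => hb hh.2)]
        simp [Matrix.one_apply, Ne.symm hb]
    · rw [Matrix.updateRow_ne ha]
      exact h a b (fun hh => ha hh.1)
  have hdet : c = 1 := by
    have h1 : x.val.det = 1 := x.prop
    rw [hxval] at h1
    rw [Matrix.det_updateRow_smul] at h1
    rw [Matrix.updateRow_eq_self, Matrix.det_one, mul_one] at h1
    exact h1
  apply Subtype.ext
  rw [hxval, hdet, one_smul, Matrix.updateRow_eq_self, Matrix.SpecialLinearGroup.coe_one]

end Memberships

section CommutatorMembership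

variable {m ℓ : ℕ}

lemma memH_Rq (u : Fin (m + 4) → ℤ) (hu : ∀ k, (ℓ : ℤ) ∣ u k)
    (hup : u (pIdx m) = 0) (huq : u (qIdx m) = 0) :
    mkR (qIdx m) u huq ∈ HH m ℓ := by
  set s : Fin (m + 4) → ℤ := Pi.single (pIdx m) 1 with hs
  have hsq : s (qIdx m) = 0 := Pi.single_eq_of_ne (Ne.symm p_ne_q) 1
  have hsq' : (-s) (qIdx m) = 0 := by simp [hsq]
  have hup' : (-u) (pIdx m) = 0 := by simp [hup]
  have huq' : (-u) (qIdx m) = 0 := by simp [huq]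
  have hs0 : ∀ k : Fin (m + 4), (k : ℕ) < m + 2 → s k = 0 := by
    intro k hk
    apply Pi.single_eq_of_ne
    simp [pIdx, Fin.ext_iff]; omega
  have hs0' : ∀ k : Fin (m + 4), (k : ℕ) < m + 2 → (-s) k = 0 := by
    intro k hk; simp [hs0 k hk]
  have hqv : m + 2 ≤ ((qIdx m : Fin (m + 4)) : ℕ) := by simp [qIdx]
  have hpv : ((pIdx m : Fin (m + 4)) : ℕ) ≠ m + 3 := by simp [pIdx]
  have hprod : mkR (qIdx m) u huq
      = mkR (qIdx m) s hsq * mkR (pIdx m) u hup * mkR (qIdx m) (-s) hsq'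
        * mkR (pIdx m) (-u) hup' := by
    apply Subtype.ext
    simp only [Matrix.SpecialLinearGroup.coe_mul, mkR_val, Rm_neg]
    rw [← sub_eq_add_neg, ← sub_eq_add_neg]
    exact (comm_row (pIdx m) (qIdx m) p_ne_q u hup huq).symm
  rw [hprod]
  refine Subgroup.mul_mem _ (Subgroup.mul_mem _ (Subgroup.mul_mem _ ?_ ?_) ?_) ?_
  · exact Subgroup.subset_closure (Or.inr (memB_mkR (qIdx m) hqv s hs0 hsq))
  · exact Subgroup.subset_closure (Or.inl (memA_mkR (pIdx m) hpv u hu hup huq))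
  · exact Subgroup.subset_closure (Or.inr (memB_mkR (qIdx m) hqv (-s) hs0' hsq'))
  · exact Subgroup.subset_closure (Or.inl (memA_mkR (pIdx m) hpv (-u)
      (fun k => (hu k).neg_right) hup' huq'))

lemma memH_Cq (w : Fin (m + 4) → ℤ) (hw : ∀ k, (ℓ : ℤ) ∣ w k)
    (hwp : w (pIdx m) = 0) (hwq : w (qIdx m) = 0) :
    mkC (qIdx m) w hwq ∈ HH m ℓ := by
  set s : Fin (m + 4) → ℤ := Pi.single (pIdx m) 1 with hs
  have hsq : s (qIdx m) = 0 := Pi.single_eq_of_ne (Ne.symm p_ne_q) 1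
  have hsq' : (-s) (qIdx m) = 0 := by simp [hsq]
  have hwp' : (-w) (pIdx m) = 0 := by simp [hwp]
  have hwq' : (-w) (qIdx m) = 0 := by simp [hwq]
  have hs0 : ∀ k : Fin (m + 4), (k : ℕ) < m + 2 → s k = 0 := by
    intro k hk
    apply Pi.single_eq_of_ne
    simp [pIdx, Fin.ext_iff]; omega
  have hs0' : ∀ k : Fin (m + 4), (k : ℕ) < m + 2 → (-s) k = 0 := by
    intro k hk; simp [hs0 k hk]
  have hqv : m + 2 ≤ ((qIdx m : Fin (m + 4)) : ℕ) := by simp [qIdx]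
  have hpv : ((pIdx m : Fin (m + 4)) : ℕ) ≠ m + 3 := by simp [pIdx]
  have hprod : mkC (qIdx m) w hwq
      = mkC (pIdx m) (-w) hwp' * mkC (qIdx m) (-s) hsq' * mkC (pIdx m) w hwp
        * mkC (qIdx m) s hsq := by
    apply Subtype.ext
    simp only [Matrix.SpecialLinearGroup.coe_mul, mkC_val, Cm_neg]
    rw [← sub_eq_add_neg, ← sub_eq_add_neg]
    exact (comm_col (pIdx m) (qIdx m) p_ne_q w hwp hwq).symm
  rw [hprod]
  refine Subgroup.mul_mem _ (Subgroup.mul_mem _ (Subgroup.mul_mem _ ?_ ?_) ?_) ?_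
  · exact Subgroup.subset_closure (Or.inl (memA_mkC (pIdx m) hpv (-w)
      (fun k => (hw k).neg_right) hwp' hwq'))
  · exact Subgroup.subset_closure (Or.inr (memB_mkC (qIdx m) hqv (-s) hs0' hsq'))
  · exact Subgroup.subset_closure (Or.inl (memA_mkC (pIdx m) hpv w hw hwp hwq))
  · exact Subgroup.subset_closure (Or.inr (memB_mkC (qIdx m) hqv s hs0 hsq))

end CommutatorMembership

section Arith

lemma exists_S (a b y : ℤ) :
    ∃ S : Matrix (Fin 2) (Fin 2) ℤ, S.det = 1 ∧
      S 0 0 * a + S 0 1 * b = (Int.gcd a b : ℤ) ∧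
      S 1 0 * a + S 1 1 * b = y * (Int.gcd a b : ℤ) := by
  rcases eq_or_ne (Int.gcd a b) 0 with h0 | h0
  · have ha : a = 0 := Int.gcd_eq_zero_iff.mp h0 |>.1
    have hb : b = 0 := Int.gcd_eq_zero_iff.mp h0 |>.2
    refine ⟨1, Matrix.det_one, ?_, ?_⟩ <;> simp [ha, hb, h0]
  · set G : ℤ := (Int.gcd a b : ℤ) with hGdef
    have hGne : G ≠ 0 := by
      rw [hGdef]
      exact_mod_cast h0
    obtain ⟨a', ha'⟩ : G ∣ a := Int.gcd_dvd_left _ _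
    obtain ⟨b', hb'⟩ : G ∣ b := Int.gcd_dvd_right _ _
    have hbez : G = a * Int.gcdA a b + b * Int.gcdB a b := Int.gcd_eq_gcd_ab a b
    set P : ℤ := Int.gcdA a b
    set Q : ℤ := Int.gcdB a b
    refine ⟨Matrix.of ![![P, Q], ![y * P - b', y * Q + a']], ?_, ?_, ?_⟩
    · rw [Matrix.det_fin_two]
      simp only [Matrix.of_apply, Matrix.cons_val', Matrix.cons_val_zero, Matrix.cons_val_one,
        Matrix.head_cons, Matrix.head_fin_const, Matrix.empty_val', Matrix.cons_val_fin_one]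
      have key : G * (P * a' + Q * b') = G * 1 := by
        rw [mul_one]
        calc G * (P * a' + Q * b') = (G * a') * P + (G * b') * Q := by ring
          _ = a * P + b * Q := by rw [← ha', ← hb']
          _ = G := by rw [hbez]
      have h2 := mul_left_cancel₀ hGne key
      calc P * (y * Q + a') - Q * (y * P - b') = P * a' + Q * b' := by ring
        _ = 1 := h2
    · simp only [Matrix.of_apply, Matrix.cons_val', Matrix.cons_val_zero, Matrix.cons_val_one,
        Matrix.head_cons, Matrix.head_fin_const, Matrix.empty_val', Matrix.cons_val_fin_one]
      rw [hbez]; ring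
    · simp only [Matrix.of_apply, Matrix.cons_val', Matrix.cons_val_zero, Matrix.cons_val_one,
        Matrix.head_cons, Matrix.head_fin_const, Matrix.empty_val', Matrix.cons_val_fin_one]
      have : a' * b = b' * a := by rw [ha', hb']; ring
      calc (y * P - b') * a + (y * Q + a') * b
          = y * (a * P + b * Q) + (a' * b - b' * a) := by ring
        _ = y * G := by rw [← hbez, this]; ring
      
lemma exists_combo {m ℓ : ℕ} (v : Fin (m + 4) → ℤ)
    (hdvd : ∀ i, i ≠ qIdx m → (ℓ : ℤ) ∣ v i)
    (hq : (ℓ : ℤ) ∣ v (qIdx m) - 1)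
    (c0 : Fin (m + 4) → ℤ) (hc0 : ∑ k, c0 k * v k = 1) :
    ∃ c : Fin (m + 4) → ℤ,
      ∑ k, c k * (if (k : ℕ) < m + 2 then (ℓ : ℤ) * v k
        else if k = pIdx m then (Int.gcd (v (pIdx m)) (v (qIdx m)) : ℤ) else 0) = 1 := by
  set G : ℤ := (Int.gcd (v (pIdx m)) (v (qIdx m)) : ℤ) with hGdef
  set w : Fin (m + 4) → ℤ := fun k => if (k : ℕ) < m + 2 then (ℓ : ℤ) * v k
    else if k = pIdx m then G else 0 with hwdef
  set I : Ideal ℤ := Ideal.span (Set.range w) with hIdef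
  set d : ℤ := Submodule.IsPrincipal.generator I with hddef
  have hI : Ideal.span {d} = I := Ideal.span_singleton_generator I
  have hdw : ∀ k, d ∣ w k := by
    intro k
    have hk : w k ∈ I := Ideal.subset_span (Set.mem_range_self k)
    rw [← hI] at hk
    exact Ideal.mem_span_singleton.mp hk
  have hdG : d ∣ G := by
    have := hdw (pIdx m)
    simpa [hwdef, pIdx] using this
  have hGp : G ∣ v (pIdx m) := Int.gcd_dvd_left _ _
  have hGq : G ∣ v (qIdx m) := Int.gcd_dvd_right _ _
  have hdq : d ∣ v (qIdx m) := hdG.trans hGq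
  have hcop : IsCoprime d (ℓ : ℤ) := by
    rw [Int.isCoprime_iff_gcd_eq_one]
    have h1 : (Int.gcd d (ℓ : ℤ) : ℤ) ∣ 1 := by
      have hd1 : (Int.gcd d (ℓ : ℤ) : ℤ) ∣ v (qIdx m) := (Int.gcd_dvd_left _ _).trans hdq
      have hd2 : (Int.gcd d (ℓ : ℤ) : ℤ) ∣ v (qIdx m) - 1 := (Int.gcd_dvd_right _ _).trans hq
      simpa using dvd_sub hd1 hd2
    exact_mod_cast Nat.dvd_one.mp (by exact_mod_cast h1)
  have hdv : ∀ k, d ∣ v k := by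
    intro k
    rcases tri k with hk | hk | hk
    · have := hdw k
      rw [hwdef] at this
      simp only [hk, if_pos] at this
      exact hcop.dvd_of_dvd_mul_left this
    · exact hk ▸ hdG.trans hGp
    · exact hk ▸ hdq
  have hd1 : d ∣ 1 := by
    rw [← hc0]
    exact Finset.dvd_sum (fun k _ => (hdv k).mul_left (c0 k))
  have hIt : I = ⊤ := by
    rw [← hI]
    exact Ideal.span_singleton_eq_top.mpr (isUnit_of_dvd_one hd1)
  have h1I : (1 : ℤ) ∈ Submodule.span ℤ (Set.range w) := by
    have : (1 : ℤ) ∈ I := by rw [hIt]; exact Submodule.mem_top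
    exact this
  obtain ⟨c, hc⟩ := (Submodule.mem_span_range_iff_exists_fun ℤ).mp h1I
  exact ⟨c, by simpa [smul_eq_mul, hwdef] using hc⟩

end Arith

section Main

variable {m ℓ : ℕ}

lemma map_val (ℓ : ℕ) (g : Matrix.SpecialLinearGroup (Fin (m + 4)) ℤ) (a b : Fin (m + 4)) :
    (Matrix.SpecialLinearGroup.map (n := Fin (m + 4)) (Int.castRingHom (ZMod ℓ)) g).val a b
      = ((g.val a b : ℤ) : ZMod ℓ) := by
  rfl

lemma main_lemma (m ℓ : ℕ) :
    (Matrix.SpecialLinearGroup.map (n := Fin (m + 4)) (Int.castRingHom (ZMod ℓ))).ker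
      ≤ HH m ℓ := by
  intro g hg
  have hgker := ker_entry hg
  set v : Fin (m + 4) → ℤ := fun i => g.val i (qIdx m) with hvdef
  have hvd : ∀ i, i ≠ qIdx m → (ℓ : ℤ) ∣ v i := by
    intro i hi
    have h := hgker i (qIdx m)
    rw [Matrix.one_apply_ne hi] at h
    exact (ZMod.intCast_zmod_eq_zero_iff_dvd _ _).mp h
  have hvq : (ℓ : ℤ) ∣ v (qIdx m) - 1 := by
    have h := hgker (qIdx m) (qIdx m)
    rw [Matrix.one_apply_eq] at h
    apply (ZMod.intCast_zmod_eq_zero_iff_dvd _ _).mp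
    rw [Int.cast_sub, Int.cast_one, h, sub_self]
  have hadj : ∑ k, g.val.adjugate (qIdx m) k * v k = 1 := by
    have h := Matrix.adjugate_mul g.val
    have h2 := congrArg (fun M => M (qIdx m) (qIdx m)) h
    simpa [Matrix.mul_apply, Matrix.one_apply, g.prop] using h2
  obtain ⟨c, hc⟩ := exists_combo v hvd hvq _ hadj
  set G : ℤ := ((Int.gcd (v (pIdx m)) (v (qIdx m)) : ℕ) : ℤ) with hGdef
  obtain ⟨S, hSdet, hS1, hS2⟩ := exists_S (v (pIdx m)) (v (qIdx m)) (c (pIdx m))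
  set h1 : Matrix.SpecialLinearGroup (Fin (m + 4)) ℤ := mkEmb (m := m) S hSdet with hh1def
  set X1 : Matrix (Fin (m + 4)) (Fin (m + 4)) ℤ := embM m S * g.val with hX1def
  have hX1lt : ∀ a : Fin (m + 4), (a : ℕ) < m + 2 → ∀ b, X1 a b = g.val a b :=
    fun a ha b => embM_mul_apply_lt S g.val a b ha
  have hX1p : X1 (pIdx m) (qIdx m) = G := by
    rw [hX1def, embM_mul_apply_p]; exact hS1
  have hX1q : X1 (qIdx m) (qIdx m) = c (pIdx m) * G := by
    rw [hX1def, embM_mul_apply_q]; exact hS2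
  set u : Fin (m + 4) → ℤ := fun k => if (k : ℕ) < m + 2 then (ℓ : ℤ) * c k else 0 with hudef
  have hup : u (pIdx m) = 0 := by simp [hudef, pIdx]
  have huq : u (qIdx m) = 0 := by simp [hudef, qIdx]
  set h2 : Matrix.SpecialLinearGroup (Fin (m + 4)) ℤ := mkR (qIdx m) u huq with hh2def
  have hudvd : ∀ k, (ℓ : ℤ) ∣ u k := by
    intro k
    rw [hudef]
    dsimp only
    split
    · exact Dvd.intro _ rfl
    · exact dvd_zero _
  have hh2H : h2 ∈ HH m ℓ := memH_Rq u hudvd hup huq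
  set X2 : Matrix (Fin (m + 4)) (Fin (m + 4)) ℤ := (1 + Rm (qIdx m) u) * X1 with hX2def
  have hX2ne : ∀ a, a ≠ qIdx m → ∀ b, X2 a b = X1 a b := by
    intro a ha b
    rw [hX2def, one_add_Rm_mul_apply, if_neg ha, add_zero]
  have hX2qq : X2 (qIdx m) (qIdx m) = 1 := by
    rw [hX2def, one_add_Rm_mul_apply, if_pos rfl, hX1q]
    have hsum : ∀ k : Fin (m + 4), u k * X1 k (qIdx m)
        = c k * (if (k : ℕ) < m + 2 then (ℓ : ℤ) * v k
            else if k = pIdx m then G else 0)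
          - (if k = pIdx m then c (pIdx m) * G else 0) := by
      intro k
      rcases tri k with hk | hk | hk
      · have hkp : k ≠ pIdx m := by simp [pIdx, Fin.ext_iff]; omega
        have hkq : k ≠ qIdx m := by simp [qIdx, Fin.ext_iff]; omega
        rw [hX1lt k hk]
        simp only [hudef, hk, if_pos, if_neg hkp]
        have : g.val k (qIdx m) = v k := rfl
        rw [this]
        ring
      · subst hk
        have : ¬((pIdx m : ℕ) < m + 2) := by simp [pIdx]
        simp [hup, this]
      · subst hk
        have h1' : ¬((qIdx m : ℕ) < m + 2) := by simp [qIdx]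
        simp [huq, h1', (p_ne_q (m := m)).symm]
    rw [Finset.sum_congr rfl (fun k _ => hsum k), Finset.sum_sub_distrib, hc,
      Finset.sum_ite_eq' Finset.univ (pIdx m)]
    simp only [Finset.mem_univ, if_pos]
    ring
  set w1 : Fin (m + 4) → ℤ := fun a => if (a : ℕ) < m + 2 then -(v a) else 0 with hw1def
  have hw1p : w1 (pIdx m) = 0 := by simp [hw1def, pIdx]
  have hw1q : w1 (qIdx m) = 0 := by simp [hw1def, qIdx]
  set h3 : Matrix.SpecialLinearGroup (Fin (m + 4)) ℤ := mkC (qIdx m) w1 hw1q with hh3def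
  have hw1dvd : ∀ k, (ℓ : ℤ) ∣ w1 k := by
    intro k
    rw [hw1def]
    dsimp only
    split
    · rename_i hk
      have : k ≠ qIdx m := by simp [qIdx, Fin.ext_iff]; omega
      exact (hvd k this).neg_right
    · exact dvd_zero _
  have hh3H : h3 ∈ HH m ℓ := memH_Cq w1 hw1dvd hw1p hw1q
  set X3 : Matrix (Fin (m + 4)) (Fin (m + 4)) ℤ := (1 + Cm (qIdx m) w1) * X2 with hX3def
  have hX3 : ∀ a b, X3 a b = X2 a b + w1 a * X2 (qIdx m) b :=
    fun a b => one_add_Cm_mul_apply (qIdx m) w1 X2 a b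
  have hX3q : ∀ a, X3 a (qIdx m)
      = (if a = pIdx m then G else if a = qIdx m then 1 else 0) := by
    intro a
    rcases tri a with ha | ha | ha
    · have hap : a ≠ pIdx m := by simp [pIdx, Fin.ext_iff]; omega
      have haq : a ≠ qIdx m := by simp [qIdx, Fin.ext_iff]; omega
      rw [hX3 a (qIdx m), hX2ne a haq (qIdx m), hX1lt a ha (qIdx m), hX2qq]
      have hv' : g.val a (qIdx m) = v a := rfl
      rw [hv']
      simp only [hw1def, ha, if_pos, if_neg hap, if_neg haq]
      ring
    · subst ha
      rw [hX3 _ (qIdx m), hX2ne _ p_ne_q (qIdx m), hX1p, hw1p]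
      simp [(p_ne_q (m := m))]
    · subst ha
      rw [hX3 _ (qIdx m), hX2qq, hw1q]
      simp [(p_ne_q (m := m)).symm]
  set w2 : Fin (m + 4) → ℤ := fun a => if a = pIdx m then -G else 0 with hw2def
  have hw2q : w2 (qIdx m) = 0 := by
    rw [hw2def]; exact if_neg (p_ne_q (m := m)).symm
  set h4 : Matrix.SpecialLinearGroup (Fin (m + 4)) ℤ := mkC (qIdx m) w2 hw2q with hh4def
  have hh4B : h4 ∈ botSet m ℤ := by
    apply memB_mkC
    · simp [qIdx]
    · intro k hk
      rw [hw2def]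
      have : k ≠ pIdx m := by simp [pIdx, Fin.ext_iff]; omega
      exact if_neg this
  set X4 : Matrix (Fin (m + 4)) (Fin (m + 4)) ℤ := (1 + Cm (qIdx m) w2) * X3 with hX4def
  have hX4 : ∀ a b, X4 a b = X3 a b + w2 a * X3 (qIdx m) b :=
    fun a b => one_add_Cm_mul_apply (qIdx m) w2 X3 a b
  have hX3qq : X3 (qIdx m) (qIdx m) = 1 := by
    rw [hX3q]
    simp [(p_ne_q (m := m)).symm]
  have hX4col : ∀ a, X4 a (qIdx m) = (1 : Matrix (Fin (m + 4)) (Fin (m + 4)) ℤ) a (qIdx m) := by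
    intro a
    rw [hX4 a (qIdx m), hX3q a, hX3qq]
    rcases tri a with ha | ha | ha
    · have hap : a ≠ pIdx m := by simp [pIdx, Fin.ext_iff]; omega
      have haq : a ≠ qIdx m := by simp [qIdx, Fin.ext_iff]; omega
      rw [hw2def]
      simp [hap, haq, Matrix.one_apply_ne haq]
    · subst ha
      rw [hw2def]
      simp [Matrix.one_apply_ne (p_ne_q (m := m))]
    · subst ha
      rw [hw2q]
      simp [(p_ne_q (m := m)).symm, Matrix.one_apply_eq]
  set k0 : Matrix.SpecialLinearGroup (Fin (m + 4)) ℤ := h4 * (h3 * (h2 * (h1 * g))) with hk0def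
  have hk0v : k0.val = X4 := by
    rw [hk0def, hh4def, hh3def, hh2def, hh1def]
    simp only [Matrix.SpecialLinearGroup.coe_mul, mkC_val, mkR_val, mkEmb_val]
    rfl
  have hpert : ∀ (i : Fin (m + 4)) (z : Fin (m + 4) → ℤ) (hz : z i = 0),
      (∀ k, (ℓ : ℤ) ∣ z k) →
      Matrix.SpecialLinearGroup.map (n := Fin (m + 4)) (Int.castRingHom (ZMod ℓ))
        (mkR i z hz) = 1 := by
    intro i z hz hzd
    refine MonoidHom.mem_ker.mp (mem_ker_of_dvd ℓ _ ?_)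
    intro a b
    simp only [mkR_val, Matrix.add_apply, Rm_apply, add_sub_cancel_left]
    split
    · exact hzd b
    · exact dvd_zero _
  have hpertC : ∀ (j : Fin (m + 4)) (z : Fin (m + 4) → ℤ) (hz : z j = 0),
      (∀ k, (ℓ : ℤ) ∣ z k) →
      Matrix.SpecialLinearGroup.map (n := Fin (m + 4)) (Int.castRingHom (ZMod ℓ))
        (mkC j z hz) = 1 := by
    intro j z hz hzd
    refine MonoidHom.mem_ker.mp (mem_ker_of_dvd ℓ _ ?_)
    intro a b
    simp only [mkC_val, Matrix.add_apply, Cm_apply, add_sub_cancel_left]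
    split
    · exact hzd a
    · exact dvd_zero _
  have hπh2 := hpert (qIdx m) u huq hudvd
  have hπh3 := hpertC (qIdx m) w1 hw1q hw1dvd
  have hπh1 : Matrix.SpecialLinearGroup.map (n := Fin (m + 4)) (Int.castRingHom (ZMod ℓ)) h1
      ∈ botSet m (ZMod ℓ) := map_mem_botSet (memB_mkEmb S hSdet)
  have hπh4 : Matrix.SpecialLinearGroup.map (n := Fin (m + 4)) (Int.castRingHom (ZMod ℓ)) h4
      ∈ botSet m (ZMod ℓ) := map_mem_botSet hh4B
  have hπg : Matrix.SpecialLinearGroup.map (n := Fin (m + 4)) (Int.castRingHom (ZMod ℓ)) g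
      = 1 := MonoidHom.mem_ker.mp hg
  have hπk0 : Matrix.SpecialLinearGroup.map (n := Fin (m + 4)) (Int.castRingHom (ZMod ℓ)) k0
      ∈ botSet m (ZMod ℓ) := by
    have heq : Matrix.SpecialLinearGroup.map (n := Fin (m + 4)) (Int.castRingHom (ZMod ℓ)) k0
        = Matrix.SpecialLinearGroup.map (n := Fin (m + 4)) (Int.castRingHom (ZMod ℓ)) h4
          * Matrix.SpecialLinearGroup.map (n := Fin (m + 4)) (Int.castRingHom (ZMod ℓ)) h1 := by
      rw [hk0def]
      simp only [_root_.map_mul, hh2def, hh3def, hπh2, hπh3, hπg, one_mul, mul_one]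
    rw [heq]
    exact botSet_mul hπh4 hπh1
  have hdvdrow : ∀ j : Fin (m + 4), (j : ℕ) < m + 2 → (ℓ : ℤ) ∣ X4 (qIdx m) j := by
    intro j hj
    have hne : qIdx m ≠ j := by simp [qIdx, Fin.ext_iff]; omega
    have h := hπk0 (qIdx m) j (Or.inr hj)
    rw [map_val, hk0v, Matrix.one_apply_ne hne] at h
    exact (ZMod.intCast_zmod_eq_zero_iff_dvd _ _).mp h
  set u' : Fin (m + 4) → ℤ := fun j => if (j : ℕ) < m + 2 then -(X4 (qIdx m) j) else 0
    with hu'def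
  have hu'p : u' (pIdx m) = 0 := by simp [hu'def, pIdx]
  have hu'q : u' (qIdx m) = 0 := by simp [hu'def, qIdx]
  have hu'dvd : ∀ k, (ℓ : ℤ) ∣ u' k := by
    intro k
    rw [hu'def]
    dsimp only
    split
    · rename_i hk
      exact (hdvdrow k hk).neg_right
    · exact dvd_zero _
  set r1 : Matrix.SpecialLinearGroup (Fin (m + 4)) ℤ := mkR (qIdx m) u' hu'q with hr1def
  have hr1H : r1 ∈ HH m ℓ := memH_Rq u' hu'dvd hu'p hu'q
  set X5 : Matrix (Fin (m + 4)) (Fin (m + 4)) ℤ := X4 * (1 + Rm (qIdx m) u') with hX5def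
  have hX5 : ∀ a b, X5 a b = X4 a b + X4 a (qIdx m) * u' b :=
    fun a b => mul_one_add_Rm_apply X4 (qIdx m) u' a b
  have hX5col : ∀ a, X5 a (qIdx m) = (1 : Matrix (Fin (m + 4)) (Fin (m + 4)) ℤ) a (qIdx m) := by
    intro a
    rw [hX5 a _, hu'q, mul_zero, add_zero]
    exact hX4col a
  have hX4qq : X4 (qIdx m) (qIdx m) = 1 := by rw [hX4col (qIdx m), Matrix.one_apply_eq]
  have hX5row0 : ∀ j : Fin (m + 4), (j : ℕ) < m + 2 → X5 (qIdx m) j = 0 := by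
    intro j hj
    rw [hX5 _ _, hX4qq, one_mul, hu'def]
    dsimp only
    rw [if_pos hj]
    ring
  set u'' : Fin (m + 4) → ℤ := fun j => if j = pIdx m then -(X5 (qIdx m) (pIdx m)) else 0
    with hu''def
  have hu''q : u'' (qIdx m) = 0 := by
    rw [hu''def]; exact if_neg (p_ne_q (m := m)).symm
  set r2 : Matrix.SpecialLinearGroup (Fin (m + 4)) ℤ := mkR (qIdx m) u'' hu''q with hr2def
  have hr2B : r2 ∈ botSet m ℤ := by
    apply memB_mkR
    · simp [qIdx]
    · intro k hk
      rw [hu''def]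
      have : k ≠ pIdx m := by simp [pIdx, Fin.ext_iff]; omega
      exact if_neg this
  set X6 : Matrix (Fin (m + 4)) (Fin (m + 4)) ℤ := X5 * (1 + Rm (qIdx m) u'') with hX6def
  have hX6 : ∀ a b, X6 a b = X5 a b + X5 a (qIdx m) * u'' b :=
    fun a b => mul_one_add_Rm_apply X5 (qIdx m) u'' a b
  have hX5qq : X5 (qIdx m) (qIdx m) = 1 := by rw [hX5col (qIdx m), Matrix.one_apply_eq]
  have hX6col : ∀ a, X6 a (qIdx m) = (1 : Matrix (Fin (m + 4)) (Fin (m + 4)) ℤ) a (qIdx m) := by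
    intro a
    rw [hX6 a _, hu''q, mul_zero, add_zero]
    exact hX5col a
  have hX6row : ∀ j, X6 (qIdx m) j = (1 : Matrix (Fin (m + 4)) (Fin (m + 4)) ℤ) (qIdx m) j := by
    intro j
    rw [hX6 _ _, hX5qq, one_mul]
    rcases tri j with hj | hj | hj
    · have hjp : j ≠ pIdx m := by simp [pIdx, Fin.ext_iff]; omega
      have hjq : qIdx m ≠ j := by simp [qIdx, Fin.ext_iff]; omega
      rw [hX5row0 j hj, hu''def]
      dsimp only
      rw [if_neg hjp, Matrix.one_apply_ne hjq]
      ring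
    · subst hj
      rw [hu''def]
      dsimp only
      rw [if_pos rfl, Matrix.one_apply_ne (p_ne_q (m := m)).symm]
      ring
    · subst hj
      rw [hX5qq, hu''q, Matrix.one_apply_eq]
      ring
  set k1 : Matrix.SpecialLinearGroup (Fin (m + 4)) ℤ := k0 * r1 * r2 with hk1def
  have hk1v : k1.val = X6 := by
    rw [hk1def, hr1def, hr2def]
    simp only [Matrix.SpecialLinearGroup.coe_mul, mkR_val]
    rw [hX6def, hX5def, hk0v]
  have hπk1 : Matrix.SpecialLinearGroup.map (n := Fin (m + 4)) (Int.castRingHom (ZMod ℓ)) k1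
      ∈ botSet m (ZMod ℓ) := by
    have hπr1 := hpert (qIdx m) u' hu'q hu'dvd
    have heq : Matrix.SpecialLinearGroup.map (n := Fin (m + 4)) (Int.castRingHom (ZMod ℓ)) k1
        = Matrix.SpecialLinearGroup.map (n := Fin (m + 4)) (Int.castRingHom (ZMod ℓ)) k0
          * Matrix.SpecialLinearGroup.map (n := Fin (m + 4)) (Int.castRingHom (ZMod ℓ)) r2 := by
      rw [hk1def]
      simp only [_root_.map_mul, hr1def, hπr1, mul_one]
    rw [heq]
    exact botSet_mul hπk0 (map_mem_botSet hr2B)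
  have hk1A : k1 ∈ setA m ℓ := by
    constructor
    · rw [MonoidHom.mem_ker]
      apply SL_eq_one
      intro a b hab
      rw [map_val, hk1v]
      by_cases hcase : (a : ℕ) < m + 2 ∨ (b : ℕ) < m + 2
      · have h := hπk1 a b hcase
        rw [map_val, hk1v] at h
        exact h
      · push_neg at hcase
        obtain ⟨hca, hcb⟩ := hcase
        rcases tri a with ha | ha | ha
        · exact absurd ha (by omega)
        · rcases tri b with hb | hb | hb
          · exact absurd hb (by omega)
          · exact absurd ⟨ha, hb⟩ hab
          · subst ha; subst hb
            rw [hX6col (pIdx m), one_matrix_cast]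
        · subst ha
          rw [hX6row b, one_matrix_cast]
    · intro i j hij
      rw [hk1v]
      rcases hij with hij | hij
      · have hiq : i = qIdx m := by simp [qIdx, Fin.ext_iff, hij]
        subst hiq
        exact hX6row j
      · have hjq : j = qIdx m := by simp [qIdx, Fin.ext_iff, hij]
        subst hjq
        exact hX6col i
  have hgeq : g = h1⁻¹ * (h2⁻¹ * (h3⁻¹ * (h4⁻¹ * (k1 * (r2⁻¹ * r1⁻¹))))) := by
    rw [hk1def, hk0def]
    group
  have hH1 : h1 ∈ HH m ℓ := Subgroup.subset_closure (Or.inr (memB_mkEmb S hSdet))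
  have hH4 : h4 ∈ HH m ℓ := Subgroup.subset_closure (Or.inr hh4B)
  have hK1 : k1 ∈ HH m ℓ := Subgroup.subset_closure (Or.inl hk1A)
  have hR2 : r2 ∈ HH m ℓ := Subgroup.subset_closure (Or.inr hr2B)
  rw [hgeq]
  exact Subgroup.mul_mem _ (Subgroup.inv_mem _ hH1)
    (Subgroup.mul_mem _ (Subgroup.inv_mem _ hh2H)
      (Subgroup.mul_mem _ (Subgroup.inv_mem _ hh3H)
        (Subgroup.mul_mem _ (Subgroup.inv_mem _ hH4)
          (Subgroup.mul_mem _ hK1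
            (Subgroup.mul_mem _ (Subgroup.inv_mem _ hR2) (Subgroup.inv_mem _ hr1H))))))

end Main

end CongrAux

/-- For `n ≥ 3` and `ℓ ≥ 1`, the congruence subgroup `Γ_{n+1}(ℓ) ⊆ SL_{n+1}(ℤ)` is
contained in the subgroup generated by `Γ_n(ℓ)` (embedded in the top-left `n × n`
block, acting as the identity on the last coordinate) together with the copy of
`SL_2(ℤ)` embedded in the bottom-right `2 × 2` block.  Here `n = m + 3`. -/
theorem congruenceSubgroup_le_closure_topLeft_union_bottomSL2 (m ℓ : ℕ) (hℓ : 1 ≤ ℓ) :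
    (Matrix.SpecialLinearGroup.map (n := Fin (m + 4))
        (Int.castRingHom (ZMod ℓ))).ker ≤
      Subgroup.closure
        ({g : Matrix.SpecialLinearGroup (Fin (m + 4)) ℤ |
            g ∈ (Matrix.SpecialLinearGroup.map (n := Fin (m + 4))
              (Int.castRingHom (ZMod ℓ))).ker ∧
            ∀ i j : Fin (m + 4), ((i : ℕ) = m + 3 ∨ (j : ℕ) = m + 3) →
              g.val i j = (1 : Matrix (Fin (m + 4)) (Fin (m + 4)) ℤ) i j} ∪
         {g : Matrix.SpecialLinearGroup (Fin (m + 4)) ℤ |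
            ∀ i j : Fin (m + 4), ((i : ℕ) < m + 2 ∨ (j : ℕ) < m + 2) →
              g.val i j = (1 : Matrix (Fin (m + 4)) (Fin (m + 4)) ℤ) i j}) := by
  exact CongrAux.main_lemma m ℓ
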